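/- Ping-Pong Lemma: Let G be a group acting on a set X, let g₁, g₂ ∈ G, and let X₁, X₂ ⊆ X be nonempty disjoint subsets such that for every nonzero integer n and all i, j ∈ {1,2} with i ≠ j one has g_iⁿ(X_j) ⊆ X_i. Then the subgroup generated by g₁ and g₂ is free with basis {g₁, g₂}. -/

import Mathlib

open Pointwise

/-- **Ping-Pong Lemma.** Let `G` be a group acting on a set `X`, let `g₁ g₂ : G`, and let
`X₁, X₂ ⊆ X` be nonempty disjoint subsets such that for every nonzero integer `n`,
`g₁ ^ n` maps `X₂` into `X₁` and `g₂ ^ n` maps `X₁` into `X₂`. Then the subgroup generated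
by `g₁` and `g₂` is free with basis `{g₁, g₂}`, i.e. the homomorphism from the free group
on two generators sending the generators to `g₁` and `g₂` is injective. -/
theorem pingPongLemma {G X : Type*} [Group G] [MulAction G X] (g₁ g₂ : G)
    (X₁ X₂ : Set X) (hne₁ : X₁.Nonempty) (hne₂ : X₂.Nonempty)
    (hdisj : Disjoint X₁ X₂)
    (h₁ : ∀ n : ℤ, n ≠ 0 → (g₁ ^ n) • X₂ ⊆ X₁)
    (h₂ : ∀ n : ℤ, n ≠ 0 → (g₂ ^ n) • X₁ ⊆ X₂) :
    Function.Injective ⇑(FreeGroup.lift ![g₁, g₂]) := by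
  set a : Fin 2 → G := ![g₁, g₂] with ha
  have : FreeGroup.lift a =
      (Monoid.CoprodI.lift fun i => FreeGroup.lift fun _ => a i).comp
        (@freeGroupEquivCoprodI (Fin 2)).toMonoidHom := by
    ext i
    simp
  rw [this, MonoidHom.coe_comp]
  refine Function.Injective.comp ?_ (MulEquiv.injective freeGroupEquivCoprodI)
  let H : Fin 2 → Type _ := fun _i => FreeGroup Unit
  let f : ∀ i, H i →* G := fun i => FreeGroup.lift fun _ => a i
  let X' : Fin 2 → Set X := ![X₁, X₂]
  have key : ∀ i j : Fin 2, i ≠ j → ∀ n : ℤ, n ≠ 0 → a i ^ n • X' j ⊆ X' i := by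
    intro i j hij n hn
    fin_cases i <;> fin_cases j <;> simp_all [X', ha] <;>
      first | exact h₁ n hn | exact h₂ n hn
  apply Monoid.CoprodI.lift_injective_of_ping_pong f
      (Or.inr ⟨0, le_trans (by exact_mod_cast (Cardinal.nat_lt_aleph0 3).le) (Cardinal.aleph0_le_mk (FreeGroup Unit))⟩) X'
  · intro i
    fin_cases i
    · exact hne₁
    · exact hne₂
  · intro i j hij
    fin_cases i <;> fin_cases j <;> simp only [X', Function.onFun] <;>
      first
        | exact absurd rfl hij
        | exact hdisj
        | exact hdisj.symm
  · intro i j hij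
    refine FreeGroup.freeGroupUnitEquivInt.forall_congr_left.mpr ?_
    intro n hne1
    change FreeGroup.lift (fun _ => a i) (FreeGroup.of () ^ n) • X' j ⊆ X' i
    simp only [map_zpow, FreeGroup.lift_apply_of]
    have hnne0 : n ≠ 0 := by
      rintro rfl
      apply hne1
      simp [FreeGroup.freeGroupUnitEquivInt]
    exact key i j hij n hnne0
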